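/- The jump-defect admits a bound state: for α > 0, the function v(x,t) = v₀ e^{iα²t/2 − αx} on x > 0 together with u ≡ 0 on x < 0 solves the linear Schrödinger equation 2iψ_t + ψ_xx = 0 on each half-line, satisfies the jump-defect sewing conditions at x = 0, and v is square-integrable on (0,∞). -/

import Mathlib

open Complex MeasureTheory

lemma jd_deriv_t (α : ℝ) (v₀ : ℂ) (x t : ℝ) :
    HasDerivAt (fun s : ℝ => v₀ * Complex.exp (I * (α : ℂ) ^ 2 * (s : ℂ) / 2 - (α : ℂ) * (x : ℂ)))
      (v₀ * Complex.exp (I * (α : ℂ) ^ 2 * (t : ℂ) / 2 - (α : ℂ) * (x : ℂ)) * (I * (α : ℂ) ^ 2 / 2)) t := by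
  have h0 : HasDerivAt (fun s : ℝ => I * (α : ℂ) ^ 2 * (s : ℂ) / 2 - (α : ℂ) * (x : ℂ))
      (I * (α : ℂ) ^ 2 / 2) t := by
    have h1 : HasDerivAt (fun s : ℝ => (s : ℂ)) 1 t := by
      exact (hasDerivAt_id t).ofReal_comp.congr_deriv (by simp)
    simpa using ((h1.const_mul (I * (α : ℂ) ^ 2)).div_const 2).sub_const ((α : ℂ) * (x : ℂ))
  have := (h0.cexp).const_mul v₀
  simpa [mul_assoc] using this

lemma jd_deriv_x (α : ℝ) (v₀ : ℂ) (t x : ℝ) :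
    HasDerivAt (fun y : ℝ => v₀ * Complex.exp (I * (α : ℂ) ^ 2 * (t : ℂ) / 2 - (α : ℂ) * (y : ℂ)))
      (v₀ * Complex.exp (I * (α : ℂ) ^ 2 * (t : ℂ) / 2 - (α : ℂ) * (x : ℂ)) * (-(α : ℂ))) x := by
  have h0 : HasDerivAt (fun y : ℝ => I * (α : ℂ) ^ 2 * (t : ℂ) / 2 - (α : ℂ) * (y : ℂ))
      (-(α : ℂ)) x := by
    have h1 : HasDerivAt (fun y : ℝ => (y : ℂ)) 1 x := by
      exact (hasDerivAt_id x).ofReal_comp.congr_deriv (by simp)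
    exact ((hasDerivAt_const x (I * (α : ℂ) ^ 2 * (t : ℂ) / 2)).sub (h1.const_mul (α : ℂ))).congr_deriv (by ring)
  have := (h0.cexp).const_mul v₀
  simpa [mul_assoc] using this

/-- The jump-defect admits a bound state: for `α > 0`, the function
`v(x,t) = v₀ e^{iα²t/2 - αx}` on `x > 0` together with `u ≡ 0` on `x < 0` solves the
linear Schrödinger equation `2iψ_t + ψ_xx = 0` on each half-line, satisfies the
jump-defect sewing conditions at `x = 0`, and `v` is square-integrable on `(0,∞)`. -/
theorem jump_defect_bound_state (α : ℝ) (hα : 0 < α) (v₀ : ℂ) (u v : ℝ → ℝ → ℂ)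
    (hu : u = fun (_ _ : ℝ) => (0 : ℂ))
    (hv : v = fun (x t : ℝ) =>
      v₀ * Complex.exp (I * (α : ℂ) ^ 2 * (t : ℂ) / 2 - (α : ℂ) * (x : ℂ))) :
    (∀ t : ℝ, ∀ x < (0 : ℝ),
        2 * I * deriv (fun s => u x s) t + deriv (fun y => deriv (fun z => u z t) y) x = 0) ∧
    (∀ t : ℝ, ∀ x > (0 : ℝ),
        2 * I * deriv (fun s => v x s) t + deriv (fun y => deriv (fun z => v z t) y) x = 0) ∧
    (∀ t : ℝ,
        deriv (fun y => u y t) 0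
            = -(I / (α : ℂ)) * (deriv (fun s => u 0 s) t - deriv (fun s => v 0 s) t)
                + ((α : ℂ) / 2) * (u 0 t + v 0 t) ∧
        deriv (fun y => v y t) 0
            = -(I / (α : ℂ)) * (deriv (fun s => u 0 s) t - deriv (fun s => v 0 s) t)
                - ((α : ℂ) / 2) * (u 0 t + v 0 t)) ∧
    (∀ t : ℝ, IntegrableOn (fun x => ‖v x t‖ ^ 2) (Set.Ioi (0 : ℝ))) := by
  subst hu hv
  have hα' : (α : ℂ) ≠ 0 := by exact_mod_cast (ne_of_gt hα)
  -- formulas for derivatives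
  have ht : ∀ x t : ℝ,
      deriv (fun s : ℝ => v₀ * Complex.exp (I * (α : ℂ) ^ 2 * (s : ℂ) / 2 - (α : ℂ) * (x : ℂ))) t
        = v₀ * Complex.exp (I * (α : ℂ) ^ 2 * (t : ℂ) / 2 - (α : ℂ) * (x : ℂ)) * (I * (α : ℂ) ^ 2 / 2) :=
    fun x t => (jd_deriv_t α v₀ x t).deriv
  have hx : ∀ t : ℝ,
      (deriv fun y : ℝ => v₀ * Complex.exp (I * (α : ℂ) ^ 2 * (t : ℂ) / 2 - (α : ℂ) * (y : ℂ)))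
        = fun x : ℝ => v₀ * Complex.exp (I * (α : ℂ) ^ 2 * (t : ℂ) / 2 - (α : ℂ) * (x : ℂ)) * (-(α : ℂ)) :=
    fun t => funext fun x => (jd_deriv_x α v₀ t x).deriv
  have hxx : ∀ t x : ℝ,
      deriv (fun y : ℝ => deriv (fun z : ℝ =>
          v₀ * Complex.exp (I * (α : ℂ) ^ 2 * (t : ℂ) / 2 - (α : ℂ) * (z : ℂ))) y) x
        = v₀ * Complex.exp (I * (α : ℂ) ^ 2 * (t : ℂ) / 2 - (α : ℂ) * (x : ℂ)) * (α : ℂ) ^ 2 := by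
    intro t x
    rw [hx t]
    have := ((jd_deriv_x α v₀ t x).mul_const (-(α : ℂ))).deriv
    rw [this]; ring
  refine ⟨?_, ?_, ?_, ?_⟩
  · intro t x _
    simp
  · intro t x _
    rw [ht, hxx]
    have hI : I * I = -1 := Complex.I_mul_I
    ring_nf
    rw [Complex.I_sq]
    ring
  · intro t
    constructor
    · simp only [deriv_const']
      rw [ht]
      field_simp
      ring_nf
      rw [Complex.I_sq]
      ring
    · rw [hx, ht]
      simp only [deriv_const']
      field_simp
      ring_nf
      rw [Complex.I_sq]
      ring
  · intro t
    have heq : (fun x : ℝ => ‖v₀ * Complex.exp (I * (α : ℂ) ^ 2 * (t : ℂ) / 2 - (α : ℂ) * (x : ℂ))‖ ^ 2)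
        = fun x : ℝ => ‖v₀‖ ^ 2 * Real.exp (-(2 * α) * x) := by
      funext x
      simp only [norm_mul, Complex.norm_exp]
      rw [mul_pow, ← Real.exp_nat_mul]
      have h2 : ((α : ℂ) ^ 2).im = 0 := by simp [pow_two]
      simp [h2]
      left
      ring
    rw [heq]
    exact (exp_neg_integrableOn_Ioi 0 (by positivity)).const_mul _
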